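/- Let H be a C¹ gauge function (away from 0) with polar H°. Then for every x ∈ ℝⁿ \ {0}: H°(x) ∇H(∇H°(x)) = x and H(x) ∇H°(∇H(x)) = x. -/

import Mathlib

open MeasureTheory Set

noncomputable def polarGauge (n : ℕ) (H : EuclideanSpace ℝ (Fin n) → ℝ)
    (x : EuclideanSpace ℝ (Fin n)) : ℝ :=
  sSup {r : ℝ | ∃ ξ : EuclideanSpace ℝ (Fin n), ξ ≠ 0 ∧ r = inner ℝ x ξ / H ξ}

open Filter Topology InnerProductSpace

section Aux

variable {F : Type*} [NormedAddCommGroup F] [InnerProductSpace ℝ F] [CompleteSpace F]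

lemma aux_inner_gradient_apply (f : F → ℝ) (x y : F) :
    (inner ℝ (gradient f x) y : ℝ) = fderiv ℝ f x y := by
  rw [gradient, InnerProductSpace.toDual_symm_apply]

lemma aux_euler_formula (f : F → ℝ) (x : F) (hf : DifferentiableAt ℝ f x)
    (hpos : ∀ t : ℝ, 0 < t → f (t • x) = t * f x) :
    fderiv ℝ f x x = f x := by
  have hg : HasDerivAt (fun t : ℝ => t • x) x 1 := by
    simpa using (hasDerivAt_id (1 : ℝ)).smul_const x
  have h1 : HasDerivAt (fun t : ℝ => f (t • x)) (fderiv ℝ f x x) 1 := by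
    have hf' : HasFDerivAt f (fderiv ℝ f x) ((1 : ℝ) • x) := by
      rw [one_smul]; exact hf.hasFDerivAt
    exact hf'.comp_hasDerivAt 1 hg
  have h2 : HasDerivAt (fun t : ℝ => f (t • x)) (f x) 1 := by
    have he : (fun t : ℝ => f (t • x)) =ᶠ[𝓝 (1 : ℝ)] fun t => t * f x := by
      filter_upwards [Ioi_mem_nhds (show (0:ℝ) < 1 by norm_num)] with t ht
      exact hpos t ht
    exact (hasDerivAt_mul_const (f x)).congr_of_eventuallyEq he
  exact h1.unique h2

lemma aux_convex_subgrad (f : F → ℝ) (hconv : ConvexOn ℝ univ f) (x y : F)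
    (hf : DifferentiableAt ℝ f x) :
    fderiv ℝ f x (y - x) ≤ f y - f x := by
  set φ : ℝ → ℝ := fun t => f (x + t • (y - x)) with hφdef
  have hg : HasDerivAt (fun t : ℝ => x + t • (y - x)) (y - x) 0 := by
    simpa using ((hasDerivAt_id (0 : ℝ)).smul_const (y - x)).const_add x
  have hφ : HasDerivAt φ (fderiv ℝ f x (y - x)) 0 := by
    have hf' : HasFDerivAt f (fderiv ℝ f x) (x + (0 : ℝ) • (y - x)) := by
      simpa using hf.hasFDerivAt
    exact hf'.comp_hasDerivAt 0 hg
  have h2 : Tendsto (slope φ 0) (𝓝[>] (0:ℝ)) (𝓝 (fderiv ℝ f x (y - x))) :=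
    (hasDerivAt_iff_tendsto_slope.mp hφ).mono_left
      (nhdsWithin_mono _ (fun t ht => ne_of_gt ht))
  refine le_of_tendsto h2 ?_
  filter_upwards [Ioo_mem_nhdsGT (show (0:ℝ) < 1 by norm_num)] with t ht
  have hc := hconv.2 (mem_univ x) (mem_univ y)
    (by linarith [ht.2] : (0:ℝ) ≤ 1 - t) ht.1.le (by ring)
  have hxt : x + t • (y - x) = (1 - t) • x + t • y := by module
  have hφt : φ t ≤ (1 - t) * f x + t * f y := by
    simpa [hφdef, hxt, smul_eq_mul] using hc
  have hφ0 : φ 0 = f x := by simp [hφdef]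
  rw [slope_def_field, sub_zero, div_le_iff₀ ht.1]
  nlinarith [ht.1]

end Aux

theorem gauge_polar_gradient_identities (n : ℕ) (H : EuclideanSpace ℝ (Fin n) → ℝ) (a b : ℝ)
    (ha : 0 < a) (hab : a ≤ b)
    (hconv : ConvexOn ℝ univ H)
    (hhom : ∀ (t : ℝ) (ξ : EuclideanSpace ℝ (Fin n)), H (t • ξ) = |t| * H ξ)
    (hlow : ∀ ξ : EuclideanSpace ℝ (Fin n), a * ‖ξ‖ ≤ H ξ)
    (hup : ∀ ξ : EuclideanSpace ℝ (Fin n), H ξ ≤ b * ‖ξ‖)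
    (hsm : ContDiffOn ℝ 1 H {0}ᶜ)
    (hsc : ∀ t > 0, StrictConvex ℝ {ξ : EuclideanSpace ℝ (Fin n) | H ξ ≤ t})
    (hsmo : ContDiffOn ℝ 1 (polarGauge n H) {0}ᶜ)
    (x : EuclideanSpace ℝ (Fin n)) (hx : x ≠ 0) :
    polarGauge n H x • gradient H (gradient (polarGauge n H) x) = x ∧
    H x • gradient (polarGauge n H) (gradient H x) = x := by
  classical
  set P : EuclideanSpace ℝ (Fin n) → ℝ := polarGauge n H with hPdef
  set S : EuclideanSpace ℝ (Fin n) → Set ℝ := fun x' => {r : ℝ | ∃ ξ : EuclideanSpace ℝ (Fin n), ξ ≠ 0 ∧ r = inner ℝ x' ξ / H ξ} with hSdef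
  have hPS : ∀ x', P x' = sSup (S x') := fun x' => rfl
  have hH0 : H 0 = 0 := by simpa using hhom 0 0
  have hHpos : ∀ ξ : EuclideanSpace ℝ (Fin n), ξ ≠ 0 → 0 < H ξ := fun ξ hξ =>
    lt_of_lt_of_le (mul_pos ha (norm_pos_iff.mpr hξ)) (hlow ξ)
  have hSne : ∀ x' : EuclideanSpace ℝ (Fin n), (S x').Nonempty := fun x' => ⟨_, ⟨x, hx, rfl⟩⟩
  have hbdd : ∀ x' : EuclideanSpace ℝ (Fin n), BddAbove (S x') := by
    intro x'
    refine ⟨‖x'‖ / a, ?_⟩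
    rintro r ⟨ξ, hξ, rfl⟩
    have h1 : (inner ℝ x' ξ : ℝ) ≤ ‖x'‖ * ‖ξ‖ := real_inner_le_norm x' ξ
    have h2 := hlow ξ
    have h3 := hHpos ξ hξ
    rw [div_le_div_iff₀ h3 ha]
    nlinarith [norm_nonneg x', norm_nonneg ξ]
  have hmem : ∀ (x' ξ : EuclideanSpace ℝ (Fin n)), ξ ≠ 0 → (inner ℝ x' ξ : ℝ) / H ξ ≤ P x' := fun x' ξ hξ =>
    le_csSup (hbdd x') ⟨ξ, hξ, rfl⟩
  have hA : ∀ x' ξ : EuclideanSpace ℝ (Fin n), (inner ℝ x' ξ : ℝ) ≤ P x' * H ξ := by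
    intro x' ξ
    by_cases hξ : ξ = 0
    · simp [hξ, hH0]
    · have := hmem x' ξ hξ
      rw [div_le_iff₀ (hHpos ξ hξ)] at this
      exact this
  have hPconv : ConvexOn ℝ univ P := by
    refine ⟨convex_univ, ?_⟩
    intro p _ q _ s t hs ht hst
    rw [hPS]
    refine csSup_le (hSne _) ?_
    rintro r ⟨ξ, hξ, rfl⟩
    have h1 := hmem p ξ hξ
    have h2 := hmem q ξ hξ
    have h3 := hHpos ξ hξ
    have he : (inner ℝ (s • p + t • q) ξ : ℝ) / H ξ =
        s * ((inner ℝ p ξ : ℝ) / H ξ) + t * ((inner ℝ q ξ : ℝ) / H ξ) := by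
      rw [inner_add_left, real_inner_smul_left, real_inner_smul_left]
      ring
    rw [he, smul_eq_mul, smul_eq_mul]
    nlinarith
  have hPhom : ∀ (t : ℝ), 0 < t → ∀ x' : EuclideanSpace ℝ (Fin n), P (t • x') = t * P x' := by
    intro t ht x'
    have hle : P (t • x') ≤ t * P x' := by
      rw [hPS]
      refine csSup_le (hSne _) ?_
      rintro r ⟨ξ, hξ, rfl⟩
      have h1 := hmem x' ξ hξ
      have h3 := hHpos ξ hξ
      rw [real_inner_smul_left, mul_div_assoc]
      exact mul_le_mul_of_nonneg_left h1 ht.le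
    have hge : t * P x' ≤ P (t • x') := by
      rw [mul_comm, ← le_div_iff₀ ht, hPS x']
      refine csSup_le (hSne _) ?_
      rintro r ⟨ξ, hξ, rfl⟩
      have h1 := hmem (t • x') ξ hξ
      rw [real_inner_smul_left, mul_div_assoc] at h1
      rw [le_div_iff₀ ht, mul_comm]
      exact h1
    exact le_antisymm hle hge
  have hPx_pos : 0 < P x := by
    have h1 : (0:ℝ) < (inner ℝ x x : ℝ) / H x := by
      have : (inner ℝ x x : ℝ) = ‖x‖ ^ 2 := real_inner_self_eq_norm_sq x
      rw [this]
      have hnx : 0 < ‖x‖ := norm_pos_iff.mpr hx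
      exact div_pos (by positivity) (hHpos x hx)
    exact lt_of_lt_of_le h1 (hmem x x hx)
  have hHx_pos : 0 < H x := hHpos x hx
  -- differentiability
  have hdiffH : ∀ ξ : EuclideanSpace ℝ (Fin n), ξ ≠ 0 → DifferentiableAt ℝ H ξ := by
    intro ξ hξ
    have : ContDiffAt ℝ 1 H ξ :=
      (hsm ξ hξ).contDiffAt (isOpen_compl_singleton.mem_nhds hξ)
    exact this.differentiableAt one_ne_zero
  have hdiffP : ∀ ξ : EuclideanSpace ℝ (Fin n), ξ ≠ 0 → DifferentiableAt ℝ P ξ := by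
    intro ξ hξ
    have : ContDiffAt ℝ 1 (polarGauge n H) ξ :=
      (hsmo ξ hξ).contDiffAt (isOpen_compl_singleton.mem_nhds hξ)
    exact this.differentiableAt one_ne_zero
  -- Euler identities
  have hHeuler : ∀ ξ : EuclideanSpace ℝ (Fin n), ξ ≠ 0 → (inner ℝ (gradient H ξ) ξ : ℝ) = H ξ := by
    intro ξ hξ
    rw [aux_inner_gradient_apply]
    exact aux_euler_formula H ξ (hdiffH ξ hξ)
      (fun t ht => by rw [hhom, abs_of_pos ht])
  have hPeuler : ∀ ξ : EuclideanSpace ℝ (Fin n), ξ ≠ 0 → (inner ℝ (gradient P ξ) ξ : ℝ) = P ξ := by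
    intro ξ hξ
    rw [aux_inner_gradient_apply]
    exact aux_euler_formula P ξ (hdiffP ξ hξ) (fun t ht => hPhom t ht ξ)
  -- subgradient inequalities
  have hHsub : ∀ ξ₁ : EuclideanSpace ℝ (Fin n), ξ₁ ≠ 0 → ∀ ξ : EuclideanSpace ℝ (Fin n), (inner ℝ (gradient H ξ₁) ξ : ℝ) ≤ H ξ := by
    intro ξ₁ h1 ξ
    have hs := aux_convex_subgrad H hconv ξ₁ ξ (hdiffH ξ₁ h1)
    rw [map_sub] at hs
    have e1 : fderiv ℝ H ξ₁ ξ = (inner ℝ (gradient H ξ₁) ξ : ℝ) :=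
      (aux_inner_gradient_apply H ξ₁ ξ).symm
    have e2 : fderiv ℝ H ξ₁ ξ₁ = H ξ₁ := by
      rw [← aux_inner_gradient_apply]; exact hHeuler ξ₁ h1
    rw [e1, e2] at hs
    linarith
  have hPsub : ∀ ξ₁ : EuclideanSpace ℝ (Fin n), ξ₁ ≠ 0 → ∀ ξ : EuclideanSpace ℝ (Fin n), (inner ℝ (gradient P ξ₁) ξ : ℝ) ≤ P ξ := by
    intro ξ₁ h1 ξ
    have hs := aux_convex_subgrad P hPconv ξ₁ ξ (hdiffP ξ₁ h1)
    rw [map_sub] at hs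
    have e1 : fderiv ℝ P ξ₁ ξ = (inner ℝ (gradient P ξ₁) ξ : ℝ) :=
      (aux_inner_gradient_apply P ξ₁ ξ).symm
    have e2 : fderiv ℝ P ξ₁ ξ₁ = P ξ₁ := by
      rw [← aux_inner_gradient_apply]; exact hPeuler ξ₁ h1
    rw [e1, e2] at hs
    linarith
  set y : EuclideanSpace ℝ (Fin n) := gradient H x with hy
  set z : EuclideanSpace ℝ (Fin n) := gradient P x with hz
  have hyx : (inner ℝ y x : ℝ) = H x := hHeuler x hx
  have hzx : (inner ℝ z x : ℝ) = P x := hPeuler x hx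
  have hy0 : y ≠ 0 := by
    intro h
    rw [h, inner_zero_left] at hyx
    exact hHx_pos.ne hyx
  have hz0 : z ≠ 0 := by
    intro h
    rw [h, inner_zero_left] at hzx
    exact hPx_pos.ne hzx
  -- P y = 1
  have hPy : P y = 1 := by
    refine le_antisymm ?_ ?_
    · rw [hPS]
      refine csSup_le (hSne _) ?_
      rintro r ⟨ξ, hξ, rfl⟩
      rw [div_le_one (hHpos ξ hξ)]
      exact hHsub x hx ξ
    · have := hmem y x hx
      rwa [hyx, div_self hHx_pos.ne'] at this
  -- H z = 1
  have hcontH : Continuous H := by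
    rw [← continuousOn_univ]
    exact hconv.continuousOn isOpen_univ
  have hHz_le : H z ≤ 1 := by
    by_contra hgt
    push_neg at hgt
    have hK : Convex ℝ {ξ : EuclideanSpace ℝ (Fin n) | H ξ ≤ 1} := by
      have := hconv.convex_le 1
      simpa using this
    have hKc : IsClosed {ξ : EuclideanSpace ℝ (Fin n) | H ξ ≤ 1} := isClosed_le hcontH continuous_const
    have hzK : z ∉ {ξ : EuclideanSpace ℝ (Fin n) | H ξ ≤ 1} := by simpa using not_le.mpr hgt
    obtain ⟨f, u, hfu, huz⟩ := geometric_hahn_banach_closed_point hK hKc hzK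
    set η : EuclideanSpace ℝ (Fin n) := (InnerProductSpace.toDual ℝ (EuclideanSpace ℝ (Fin n))).symm f with hη
    have hfw : ∀ w : EuclideanSpace ℝ (Fin n), f w = (inner ℝ η w : ℝ) := fun w =>
      (InnerProductSpace.toDual_symm_apply).symm
    have hPη : P η ≤ u := by
      rw [hPS]
      refine csSup_le (hSne _) ?_
      rintro r ⟨ξ, hξ, rfl⟩
      have h3 := hHpos ξ hξ
      have hmemK : (H ξ)⁻¹ • ξ ∈ {ξ : EuclideanSpace ℝ (Fin n) | H ξ ≤ 1} := by
        have : H ((H ξ)⁻¹ • ξ) = 1 := by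
          rw [hhom, abs_of_pos (inv_pos.mpr h3), inv_mul_cancel₀ h3.ne']
        simp [this]
      have := hfu _ hmemK
      rw [hfw, real_inner_smul_right] at this
      rw [div_eq_inv_mul]
      exact this.le
    have h1 : (inner ℝ z η : ℝ) ≤ P η := hPsub x hx η
    have h2 : f z = (inner ℝ η z : ℝ) := hfw z
    rw [real_inner_comm] at h1
    linarith
  have hHz_ge : 1 ≤ H z := by
    have h1 := hA x z
    rw [real_inner_comm] at h1
    rw [hzx] at h1
    nlinarith
  have hHz : H z = 1 := le_antisymm hHz_le hHz_ge
  -- the minimization argument, packaged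
  have key : ∀ (g : EuclideanSpace ℝ (Fin n) → ℝ) (c : ℝ) (w : EuclideanSpace ℝ (Fin n)), w ≠ 0 → DifferentiableAt ℝ g w →
      (∀ η : EuclideanSpace ℝ (Fin n), 0 ≤ c * g η - (inner ℝ x η : ℝ)) →
      (c * g w - (inner ℝ x w : ℝ) = 0) →
      c • gradient g w = x := by
    intro g c w hw hdg hge heq
    set Fn : EuclideanSpace ℝ (Fin n) → ℝ := fun η => c * g η - (inner ℝ x η : ℝ) with hFn
    have hmin : IsLocalMin Fn w := by
      refine Filter.Eventually.of_forall (fun η => ?_)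
      rw [hFn]
      simp only
      rw [show c * g w - (inner ℝ x w : ℝ) = 0 from heq]
      exact hge η
    have hFd : HasFDerivAt Fn
        (c • (InnerProductSpace.toDual ℝ (EuclideanSpace ℝ (Fin n)) (gradient g w)) - innerSL ℝ x) w := by
      have h1 : HasFDerivAt g (InnerProductSpace.toDual ℝ (EuclideanSpace ℝ (Fin n)) (gradient g w)) w :=
        (hdg.hasGradientAt).hasFDerivAt
      have h2 : HasFDerivAt (fun η : EuclideanSpace ℝ (Fin n) => (inner ℝ x η : ℝ)) (innerSL ℝ x) w :=
        (innerSL ℝ x).hasFDerivAt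
      exact (h1.const_mul c).sub h2
    have h0 : fderiv ℝ Fn w = 0 := hmin.fderiv_eq_zero
    rw [hFd.fderiv] at h0
    refine ext_inner_right ℝ (fun v => ?_)
    have := congrArg (fun L : EuclideanSpace ℝ (Fin n) →L[ℝ] ℝ => L v) h0
    simp only [ContinuousLinearMap.sub_apply, ContinuousLinearMap.smul_apply,
      ContinuousLinearMap.zero_apply, innerSL_apply_apply, InnerProductSpace.toDual_apply_apply,
      smul_eq_mul] at this
    rw [real_inner_smul_left]
    linarith
  constructor
  · -- P x • gradient H z = x
    refine key H (P x) z hz0 (hdiffH z hz0) (fun η => ?_) ?_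
    · have := hA x η
      linarith
    · rw [hHz, real_inner_comm z x, hzx]; ring
  · -- H x • gradient P y = x
    refine key P (H x) y hy0 (hdiffP y hy0) (fun η => ?_) ?_
    · have := hA η x
      rw [real_inner_comm] at this
      linarith
    · rw [hPy, real_inner_comm y x, hyx]; ring
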